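/- Let F be a field of characteristic 0, n ≥ 2, and λ ∈ F with λ ≠ -2/n. Set μ = -2λ/(nλ + 2). Then the set g + W(λ), where g = {ad c : c ∈ M_n(F)} and W(λ) = {x ↦ ax + xa + λ tr(x)a + μ tr(xa)1 : a ∈ M_n(F), tr(a) = 0}, is a Lie subalgebra of End_F(M_n(F)). -/

import Mathlib

private lemma tr3 {F : Type*} [Field F] {n : ℕ} (a b c : Matrix (Fin n) (Fin n) F) :
    Matrix.trace (a * (b * c)) = Matrix.trace (c * (a * b)) := by
  rw [← mul_assoc, Matrix.trace_mul_comm]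

theorem stmt_10 (F : Type*) [Field F] [CharZero F] (n : ℕ) (hn : 2 ≤ n)
    (lam : F) (hlam : lam ≠ -2 / (n : F))
    (mu : F) (hmu : mu = -2 * lam / ((n : F) * lam + 2))
    (S : Set (Matrix (Fin n) (Fin n) F →ₗ[F] Matrix (Fin n) (Fin n) F))
    (hS : S = {d | ∃ c a : Matrix (Fin n) (Fin n) F, Matrix.trace a = 0 ∧
      ∀ x, d x = (c * x - x * c) + (a * x + x * a + (lam * Matrix.trace x) • a
        + (mu * Matrix.trace (x * a)) • (1 : Matrix (Fin n) (Fin n) F))}) :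
    (∀ d₁ ∈ S, ∀ d₂ ∈ S, d₁ + d₂ ∈ S) ∧
    (∀ c : F, ∀ d ∈ S, c • d ∈ S) ∧
    (∀ d₁ ∈ S, ∀ d₂ ∈ S, d₁ ∘ₗ d₂ - d₂ ∘ₗ d₁ ∈ S) := by
  have hn0 : (n : F) ≠ 0 := Nat.cast_ne_zero.mpr (by omega)
  have hne : (n : F) * lam + 2 ≠ 0 := by
    intro h
    apply hlam
    field_simp
    linear_combination h
  subst hS
  refine ⟨?_, ?_, ?_⟩
  · rintro d₁ ⟨c₁, a₁, h₁, hd₁⟩ d₂ ⟨c₂, a₂, h₂, hd₂⟩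
    refine ⟨c₁ + c₂, a₁ + a₂, by simp [h₁, h₂], fun x => ?_⟩
    simp only [LinearMap.add_apply, hd₁ x, hd₂ x, Matrix.mul_add, Matrix.add_mul,
      Matrix.trace_add, smul_add, add_smul, mul_add]
    abel
  · rintro r d ⟨c, a, h, hd⟩
    refine ⟨r • c, r • a, by simp [h], fun x => ?_⟩
    simp only [LinearMap.smul_apply, hd x, Matrix.mul_smul, Matrix.smul_mul,
      Matrix.trace_smul, smul_add, smul_sub, smul_smul, smul_eq_mul]
    ring_nf
  · rintro d₁ ⟨c₁, a₁, h₁, hd₁⟩ d₂ ⟨c₂, a₂, h₂, hd₂⟩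
    refine ⟨c₁ * c₂ - c₂ * c₁ + (a₁ * a₂ - a₂ * a₁),
      c₁ * a₂ - a₂ * c₁ + (a₁ * c₂ - c₂ * a₁), ?_, fun x => ?_⟩
    · simp [Matrix.trace_sub, Matrix.trace_add, Matrix.trace_mul_comm c₁ a₂,
        Matrix.trace_mul_comm a₁ c₂]
    · simp only [LinearMap.sub_apply, LinearMap.comp_apply, hd₁, hd₂]
      simp only [Matrix.mul_add, Matrix.add_mul, Matrix.mul_sub, Matrix.sub_mul,
        Matrix.trace_add, Matrix.trace_sub, Matrix.trace_smul, Matrix.trace_mul_comm _ (1 : Matrix (Fin n) (Fin n) F),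
        Matrix.trace_one, Fintype.card_fin, Matrix.mul_smul, Matrix.smul_mul, mul_one, one_mul,
        smul_add, smul_sub, smul_smul, h₁, h₂, mul_zero, zero_smul, add_zero, zero_add,
        smul_eq_mul, mul_assoc]
      simp only [tr3, Matrix.trace_mul_comm c₂ x, Matrix.trace_mul_comm a₂ x,
        Matrix.trace_mul_comm c₁ x, Matrix.trace_mul_comm a₁ x, Matrix.trace_mul_comm a₂ a₁]
      match_scalars
      all_goals try ring1
      all_goals simp only [hmu]
      all_goals field_simp [show lam * (n : F) + 2 ≠ 0 by rwa [mul_comm]]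
      all_goals try ring1
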